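/- (Lemma 1, blocker lemma) Let Ξ be a variable gadget in the instance M'(φ). In any collision-free motion plan for M'(φ) with distance cost d*(M'(φ)), all the agents that traverse Ξ (enter at its entrance and leave at its exit) take the same path through Ξ, namely the one of the two traversal paths of Ξ not taken by Ξ's blocker agent. -/

import Mathlib

/-- A MAPF instance: an undirected graph, a finite set of agents,
and for each agent a start and a goal vertex, with starts pairwise distinct
and goals pairwise distinct. -/
structure MAPF where
  V : Type
  G : SimpleGraph V
  A : Type
  fintypeA : Fintype A
  s : A → V
  t : A → V
  s_inj : Function.Injective s
  t_inj : Function.Injective t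

attribute [instance] MAPF.fintypeA

/-- A feasible trajectory for agent `r`. -/
def MAPF.IsTrajectory (M : MAPF) (r : M.A) (π : ℕ → M.V) : Prop :=
  π 0 = M.s r ∧
  (∃ T : ℕ, ∀ τ : ℕ, T ≤ τ → π τ = M.t r) ∧
  (∀ τ : ℕ, 0 < τ → π (τ - 1) = π τ ∨ M.G.Adj (π (τ - 1)) (π τ))

/-- Length of the induced path `P(r)` (trajectory with consecutive repetitions
compressed): the number of time steps at which the vertex changes. -/
noncomputable def pathLength {V : Type} (π : ℕ → V) : ℕ :=
  {τ : ℕ | 0 < τ ∧ π (τ - 1) ≠ π τ}.ncard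

/-- A motion plan: one trajectory per agent. -/
def MAPF.IsPlan (M : MAPF) (π : M.A → ℕ → M.V) : Prop :=
  ∀ r : M.A, M.IsTrajectory r (π r)

/-- Collision-free: no two agents share a vertex at a time step, and no two agents
traverse the same edge in opposite directions at the same time step. -/
def MAPF.CollisionFree (M : MAPF) (π : M.A → ℕ → M.V) : Prop :=
  ∀ r r' : M.A, r ≠ r' →
    (∀ τ : ℕ, π r τ ≠ π r' τ) ∧
    (∀ τ : ℕ, 0 < τ → ¬(π r (τ - 1) = π r' τ ∧ π r τ = π r' (τ - 1)))

/-- Distance cost of a motion plan: sum of the path lengths of the agents. -/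
noncomputable def MAPF.cost (M : MAPF) (π : M.A → ℕ → M.V) : ℕ :=
  ∑ r : M.A, pathLength (π r)

/-- `d*(M)`: sum over agents of the graph distance from start to goal. -/
noncomputable def MAPF.dStar (M : MAPF) : ℕ :=
  ∑ r : M.A, M.G.dist (M.s r) (M.t r)

open scoped Classical in
/-- The active interval of an agent: from the first time it leaves its start to
the last time it reaches its target; empty if the agent never moves. -/
noncomputable def MAPF.activeInterval (M : MAPF) (r : M.A) (π : ℕ → M.V) : Set ℕ :=
  if {τ : ℕ | π (τ + 1) ≠ M.s r} = ∅ then ∅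
  else Set.Icc (sInf {τ : ℕ | π (τ + 1) ≠ M.s r})
               (sSup {τ : ℕ | 0 < τ ∧ π (τ - 1) ≠ M.t r})

/-- A monotone motion plan: the active intervals of distinct agents are pairwise
disjoint (the agents move one by one, each moving once). -/
def MAPF.MonotonePlan (M : MAPF) (π : M.A → ℕ → M.V) : Prop :=
  ∀ r r' : M.A, r ≠ r' →
    Disjoint (M.activeInterval r (π r)) (M.activeInterval r' (π r'))

/-- A sequential motion plan: at each time step at most one agent changes vertex. -/
def MAPF.SequentialPlan (M : MAPF) (π : M.A → ℕ → M.V) : Prop :=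
  ∀ τ : ℕ, 0 < τ → ∀ r r' : M.A,
    π r (τ - 1) ≠ π r τ → π r' (τ - 1) ≠ π r' τ → r = r'

/-- A literal: a variable index together with a polarity. -/
structure Lit where
  var : ℕ
  positive : Bool
deriving DecidableEq

/-- Evaluation of a literal under an assignment. -/
def Lit.eval (a : ℕ → Bool) (l : Lit) : Bool :=
  if l.positive then a l.var else !(a l.var)

/-- A 3-clause: three literals. -/
abbrev Clause3 := Lit × Lit × Lit

def Clause3.eval (a : ℕ → Bool) (c : Clause3) : Bool :=
  c.1.eval a || c.2.1.eval a || c.2.2.eval a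

/-- A 3-CNF formula: a list of 3-clauses. -/
abbrev CNF3 := List Clause3

def CNF3.Satisfies (a : ℕ → Bool) (φ : CNF3) : Prop :=
  ∀ c ∈ φ, c.eval a = true

def CNF3.Satisfiable (φ : CNF3) : Prop :=
  ∃ a : ℕ → Bool, CNF3.Satisfies a φ

/-- The literal at occurrence `(j, i)`: position `i` of clause `j`. -/
def CNF3.litAt (φ : CNF3) (j : Fin φ.length) (i : Fin 3) : Lit :=
  if i = 0 then (φ.get j).1 else if i = 1 then (φ.get j).2.1 else (φ.get j).2.2

/-- The set of variables of a 3-CNF formula. -/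
def CNF3.vars (φ : CNF3) : Finset ℕ :=
  ((φ.map fun c => [c.1.var, c.2.1.var, c.2.2.var]).flatten).toFinset

lemma CNF3.litAt_var_mem (φ : CNF3) (j : Fin φ.length) (i : Fin 3) :
    (φ.litAt j i).var ∈ φ.vars := by
  have hc : φ.get j ∈ φ := List.get_mem φ j
  simp only [CNF3.vars, List.mem_toFinset, List.mem_flatten, List.mem_map]
  refine ⟨[(φ.get j).1.var, (φ.get j).2.1.var, (φ.get j).2.2.var], ⟨φ.get j, hc, rfl⟩, ?_⟩
  unfold CNF3.litAt
  fin_cases i <;> simp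

/-- The variables of `φ`, as a type (one per variable gadget / blocker agent). -/
abbrev CNF3.Vars (φ : CNF3) : Type := {n : ℕ // n ∈ φ.vars}

/-- Cells of the planar integer grid. -/
abbrev Cell := ℤ × ℤ

/-- The grid graph on a finite set of cells: two cells are adjacent iff their
L¹-distance is 1. -/
def gridGraph (cells : Finset Cell) : SimpleGraph {c : Cell // c ∈ cells} where
  Adj u v := (u.1.1 - v.1.1).natAbs + (u.1.2 - v.1.2).natAbs = 1
  symm := by
    constructor
    intro u v h
    omega
  loopless := by constructor; intro u h; simp at h

/-- The agents of the monotone construction `M(φ)`: one clause agent per clause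
(`Sum.inl`), and one literal agent per literal occurrence (`Sum.inr`). -/
abbrev MonoAgents (φ : CNF3) : Type := Fin φ.length ⊕ (Fin φ.length × Fin 3)

/-- The construction `M(φ)` of the paper (monotone case): a MAPF instance on a
grid graph with 3 rows, built from a room with the clause agents' starts, a
variable gadget for each variable (with two internally disjoint equal-length
shortest entrance-to-exit traversal paths, the top one carrying the starts of
the positive literal agents and the bottom one the starts of the negative
literal agents), and a clause gadget for each clause (its middle row carrying
the targets of the clause's three literal agents and its top row the target of
the clause agent, followed by an empty column that lets the clause agent reach
its target, via a strictly longer path, even when all three literal targets are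
occupied). -/
structure MonoConstruction (φ : CNF3) where
  /-- the cells of the grid graph -/
  cells : Finset Cell
  /-- the grid has 3 rows -/
  threeRows : ∀ c ∈ cells, 0 ≤ c.2 ∧ c.2 ≤ 2
  /-- start/target of the clause agents -/
  sC : Fin φ.length → {c : Cell // c ∈ cells}
  tC : Fin φ.length → {c : Cell // c ∈ cells}
  /-- start/target of the literal agents -/
  sL : Fin φ.length × Fin 3 → {c : Cell // c ∈ cells}
  tL : Fin φ.length × Fin 3 → {c : Cell // c ∈ cells}
  /-- starts are pairwise distinct -/
  starts_inj : Function.Injective (Sum.elim sC sL)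
  /-- targets are pairwise distinct -/
  targets_inj : Function.Injective (Sum.elim tC tL)
  /-- the one-cell entrance of each variable gadget -/
  entrance : φ.Vars → {c : Cell // c ∈ cells}
  /-- the one-cell exit of each variable gadget -/
  exitC : φ.Vars → {c : Cell // c ∈ cells}
  /-- the top traversal path of each variable gadget -/
  topWalk : (v : φ.Vars) → (gridGraph cells).Walk (entrance v) (exitC v)
  /-- the bottom traversal path of each variable gadget -/
  botWalk : (v : φ.Vars) → (gridGraph cells).Walk (entrance v) (exitC v)
  top_isPath : ∀ v, (topWalk v).IsPath
  bot_isPath : ∀ v, (botWalk v).IsPath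
  /-- the top path is a shortest entrance-to-exit path -/
  top_shortest : ∀ v, (topWalk v).length = (gridGraph cells).dist (entrance v) (exitC v)
  /-- the bottom path is a shortest entrance-to-exit path, of the same length -/
  bot_shortest : ∀ v, (botWalk v).length = (gridGraph cells).dist (entrance v) (exitC v)
  /-- the two traversal paths are internally disjoint -/
  internal_disjoint : ∀ v c, c ∈ (topWalk v).support → c ∈ (botWalk v).support →
    c = entrance v ∨ c = exitC v
  /-- the top path runs along the top row of the grid -/
  top_row : ∀ v c, c ∈ (topWalk v).support → c ≠ entrance v → c ≠ exitC v → c.1.2 = 2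
  /-- these are the only two shortest entrance-to-exit traversal paths -/
  two_paths : ∀ v (p : (gridGraph cells).Walk (entrance v) (exitC v)), p.IsPath →
    p.length = (gridGraph cells).dist (entrance v) (exitC v) →
    p = topWalk v ∨ p = botWalk v
  /-- starts of positive literal agents lie on the top path of their variable's gadget -/
  pos_start_on_top : ∀ (j : Fin φ.length) (i : Fin 3), (φ.litAt j i).positive = true →
    sL (j, i) ∈ (topWalk ⟨(φ.litAt j i).var, φ.litAt_var_mem j i⟩).support
  /-- starts of negative literal agents lie on the bottom path of their variable's gadget -/
  neg_start_on_bot : ∀ (j : Fin φ.length) (i : Fin 3), (φ.litAt j i).positive = false →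
    sL (j, i) ∈ (botWalk ⟨(φ.litAt j i).var, φ.litAt_var_mem j i⟩).support
  /-- literal agents' targets are on the middle row (of their clause's gadget) -/
  tL_middleRow : ∀ o, (tL o).1.2 = 1
  /-- clause agents' targets are on the top row (of their clause's gadget) -/
  tC_topRow : ∀ j, (tC j).1.2 = 2
  /-- every shortest path of a clause agent traverses every variable gadget,
  entering at its entrance and leaving at its exit -/
  clause_shortest_traverses : ∀ (j : Fin φ.length) (v : φ.Vars)
    (p : (gridGraph cells).Walk (sC j) (tC j)),
    p.length = (gridGraph cells).dist (sC j) (tC j) →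
    entrance v ∈ p.support ∧ exitC v ∈ p.support
  /-- the empty column: each clause agent can reach its target (via a strictly
  longer path) even when the three literal targets of its clause gadget are occupied -/
  detour : ∀ j : Fin φ.length, ∃ p : (gridGraph cells).Walk (sC j) (tC j),
    (gridGraph cells).dist (sC j) (tC j) < p.length ∧ ∀ i : Fin 3, tL (j, i) ∉ p.support

/-- The MAPF instance determined by the construction `M(φ)`. -/
def MonoConstruction.toMAPF {φ : CNF3} (K : MonoConstruction φ) : MAPF where
  V := {c : Cell // c ∈ K.cells}
  G := gridGraph K.cells
  A := MonoAgents φ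
  fintypeA := inferInstance
  s := Sum.elim K.sC K.sL
  t := Sum.elim K.tC K.tL
  s_inj := K.starts_inj
  t_inj := K.targets_inj

/-- `f` moves at time `τ` (changes vertex from `τ - 1` to `τ`). -/
def IsMoveAt {V : Type} (f : ℕ → V) (τ : ℕ) : Prop := 0 < τ ∧ f (τ - 1) ≠ f τ

/-- The literal agent `o` moves (strictly) after the last clause agent moves. -/
def MovesAfterClauseAgents {φ : CNF3} (K : MonoConstruction φ)
    (π : K.toMAPF.A → ℕ → K.toMAPF.V) (o : Fin φ.length × Fin 3) : Prop :=
  ∀ (j : Fin φ.length) (τ τ' : ℕ),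
    IsMoveAt (π (Sum.inl j)) τ → IsMoveAt (π (Sum.inr o)) τ' → τ < τ'

/-- The agents of the non-monotone construction `M'(φ)`: clause agents, literal
agents, and one blocker agent per variable gadget. -/
abbrev NonMonoAgents (φ : CNF3) : Type :=
  Fin φ.length ⊕ (Fin φ.length × Fin 3) ⊕ φ.Vars

/-- The construction `M'(φ)` of the paper: `M(φ)` augmented with a blocker agent
for each variable gadget, starting at the gadget's entrance with the gadget's
exit as its target; the top and bottom traversal paths are its only shortest
paths, and the gadget contains cells off both traversal paths available as
intermediate stops for the blocker. -/
structure NonMonoConstruction (φ : CNF3) extends MonoConstruction φ where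
  /-- starts (now including blocker starts = gadget entrances) are pairwise distinct -/
  starts_inj' : Function.Injective (Sum.elim sC (Sum.elim sL entrance))
  /-- targets (now including blocker targets = gadget exits) are pairwise distinct -/
  targets_inj' : Function.Injective (Sum.elim tC (Sum.elim tL exitC))
  /-- each gadget contains cells off both traversal paths, available as
  intermediate stops for the blocker -/
  off_path_cell : ∀ v : φ.Vars, ∃ c : {c : Cell // c ∈ cells},
    c ∉ (topWalk v).support ∧ c ∉ (botWalk v).support ∧
    (gridGraph cells).Reachable (entrance v) c

/-- The MAPF instance determined by the construction `M'(φ)`. -/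
def NonMonoConstruction.toMAPF {φ : CNF3} (K : NonMonoConstruction φ) : MAPF where
  V := {c : Cell // c ∈ K.cells}
  G := gridGraph K.cells
  A := NonMonoAgents φ
  fintypeA := inferInstance
  s := Sum.elim K.sC (Sum.elim K.sL K.entrance)
  t := Sum.elim K.tC (Sum.elim K.tL K.exitC)
  s_inj := K.starts_inj'
  t_inj := K.targets_inj'

/-- The blocker agent of variable gadget `v` in `M'(φ)`. -/
def blockerAgent {φ : CNF3} (v : φ.Vars) : NonMonoAgents φ := Sum.inr (Sum.inr v)

/-- Agent trajectory `f` traverses variable gadget `v`: it enters at the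
entrance and later leaves at the exit. -/
def TraversesGadget {φ : CNF3} (K : NonMonoConstruction φ)
    (f : ℕ → K.toMAPF.V) (v : φ.Vars) : Prop :=
  ∃ τ₁ τ₂ : ℕ, τ₁ ≤ τ₂ ∧ f τ₁ = K.entrance v ∧ f τ₂ = K.exitC v

namespace BlockerInfra

variable {V : Type} {G : SimpleGraph V}

/-- number of moves strictly before time `τ` -/
noncomputable def ix (f : ℕ → V) (τ : ℕ) : ℕ :=
  {σ : ℕ | σ < τ ∧ f σ ≠ f (σ + 1)}.ncard

lemma ix_finite (f : ℕ → V) (τ : ℕ) : {σ : ℕ | σ < τ ∧ f σ ≠ f (σ + 1)}.Finite :=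
  (Set.finite_Iio τ).subset (fun σ h => h.1)

@[simp] lemma ix_zero (f : ℕ → V) : ix f 0 = 0 := by
  simp [ix]

lemma ix_mono (f : ℕ → V) {τ τ' : ℕ} (h : τ ≤ τ') : ix f τ ≤ ix f τ' :=
  Set.ncard_le_ncard (fun σ hσ => ⟨lt_of_lt_of_le hσ.1 h, hσ.2⟩) (ix_finite f τ')

lemma moveset_succ_of_move (f : ℕ → V) {τ : ℕ} (h : f τ ≠ f (τ + 1)) :
    {σ : ℕ | σ < τ + 1 ∧ f σ ≠ f (σ + 1)} = insert τ {σ : ℕ | σ < τ ∧ f σ ≠ f (σ + 1)} := by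
  ext σ
  simp only [Set.mem_setOf_eq, Set.mem_insert_iff]
  constructor
  · rintro ⟨h1, h2⟩
    rcases Nat.lt_succ_iff_lt_or_eq.1 h1 with h1 | h1
    · exact Or.inr ⟨h1, h2⟩
    · exact Or.inl h1
  · rintro (rfl | ⟨h1, h2⟩)
    · exact ⟨Nat.lt_succ_self _, h⟩
    · exact ⟨Nat.lt_succ_of_lt h1, h2⟩

lemma ix_succ_of_move (f : ℕ → V) {τ : ℕ} (h : f τ ≠ f (τ + 1)) :
    ix f (τ + 1) = ix f τ + 1 := by
  rw [ix, moveset_succ_of_move f h,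
    Set.ncard_insert_of_notMem (by simp) (ix_finite f τ), ix]

lemma ix_succ_le (f : ℕ → V) (τ : ℕ) : ix f (τ + 1) ≤ ix f τ + 1 := by
  by_cases h : f τ ≠ f (τ + 1)
  · rw [ix_succ_of_move f h]
  · push_neg at h
    have hset : {σ : ℕ | σ < τ + 1 ∧ f σ ≠ f (σ + 1)}
        = {σ : ℕ | σ < τ ∧ f σ ≠ f (σ + 1)} := by
      ext σ
      simp only [Set.mem_setOf_eq]
      constructor
      · rintro ⟨h1, h2⟩
        rcases Nat.lt_succ_iff_lt_or_eq.1 h1 with h1 | h1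
        · exact ⟨h1, h2⟩
        · subst h1; exact absurd h h2
      · rintro ⟨h1, h2⟩
        exact ⟨Nat.lt_succ_of_lt h1, h2⟩
    rw [ix, hset]
    exact Nat.le_succ _

/-- if `f` is constant from `T` on, `ix` is constant from `T` on -/
lemma ix_stable (f : ℕ → V) {T : ℕ} {t : V} (hT : ∀ τ, T ≤ τ → f τ = t)
    {τ : ℕ} (h : T ≤ τ) : ix f τ = ix f T := by
  unfold ix
  congr 1
  ext σ
  simp only [Set.mem_setOf_eq]
  constructor
  · rintro ⟨h1, h2⟩
    refine ⟨?_, h2⟩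
    by_contra hc
    push_neg at hc
    exact h2 (by rw [hT σ hc, hT (σ+1) (by omega)])
  · rintro ⟨h1, h2⟩
    exact ⟨lt_of_lt_of_le h1 h, h2⟩

lemma ix_le_stable (f : ℕ → V) {T : ℕ} {t : V} (hT : ∀ τ, T ≤ τ → f τ = t)
    (τ : ℕ) : ix f τ ≤ ix f T := by
  rcases le_or_gt τ T with h | h
  · exact ix_mono f h
  · rw [ix_stable f hT h.le]

/-- `pathLength` equals total move count `ix f T` when `f` is stable from `T` on. -/
lemma pathLength_eq_ix (f : ℕ → V) {T : ℕ} {t : V} (hT : ∀ τ, T ≤ τ → f τ = t) :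
    pathLength f = ix f T := by
  unfold pathLength ix
  have himg : {τ : ℕ | 0 < τ ∧ f (τ - 1) ≠ f τ}
      = (fun σ => σ + 1) '' {σ : ℕ | σ < T ∧ f σ ≠ f (σ + 1)} := by
    ext τ
    simp only [Set.mem_setOf_eq, Set.mem_image]
    constructor
    · rintro ⟨h1, h2⟩
      refine ⟨τ - 1, ⟨?_, ?_⟩, by omega⟩
      · by_contra hc
        push_neg at hc
        exact h2 (by rw [hT (τ-1) hc, hT τ (by omega)])
      · have : τ - 1 + 1 = τ := by omega
        rw [this]; exact h2
    · rintro ⟨σ, ⟨h1, h2⟩, rfl⟩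
      exact ⟨by omega, by simpa using h2⟩
  rw [himg, Set.ncard_image_of_injective _ (fun a b h => by omega)]

/-- the tracking walk of a trajectory -/
lemma exists_tracking_walk (f : ℕ → V) {s t : V} {T : ℕ}
    (h0 : f 0 = s) (hT : ∀ τ, T ≤ τ → f τ = t)
    (hstep : ∀ τ : ℕ, f τ = f (τ + 1) ∨ G.Adj (f τ) (f (τ + 1))) :
    ∃ p : G.Walk s t, p.length = ix f T ∧ ∀ τ, f τ = p.getVert (ix f τ) := by
  induction T generalizing f t with
  | zero =>
    have hst : s = t := by rw [← h0, hT 0 le_rfl]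
    subst hst
    have hconst : ∀ τ, f τ = s := fun τ => hT τ (Nat.zero_le _)
    refine ⟨SimpleGraph.Walk.nil, by simp, fun τ => ?_⟩
    have : ix f τ = 0 := by
      rcases Nat.eq_zero_or_pos (ix f τ) with h | h
      · exact h
      · rw [ix_stable f hT (Nat.zero_le τ)]; simp
    rw [this, SimpleGraph.Walk.getVert_zero, hconst]
  | succ T IH =>
    set g : ℕ → V := fun τ => f (min τ T) with hg
    have hg0 : g 0 = s := by simp [hg, h0]
    have hgT : ∀ τ, T ≤ τ → g τ = f T := by
      intro τ h; simp [hg, Nat.min_eq_right h]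
    have hgstep : ∀ τ : ℕ, g τ = g (τ + 1) ∨ G.Adj (g τ) (g (τ + 1)) := by
      intro τ
      rcases le_or_gt (τ + 1) T with h | h
      · have h1 : min τ T = τ := by omega
        have h2 : min (τ+1) T = τ + 1 := by omega
        simp only [hg, h1, h2]
        exact hstep τ
      · have h1 : min τ T = min (τ+1) T := by omega
        left; simp [hg, h1]
    obtain ⟨q, hqlen, hqtrack⟩ := IH (f := g) (t := f T) hg0 hgT hgstep
    have hixg : ∀ τ, ix g τ = ix f (min τ T) := by
      intro τ
      unfold ix
      congr 1
      ext σ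
      simp only [Set.mem_setOf_eq]
      constructor
      · rintro ⟨h1, h2⟩
        rcases lt_or_ge σ T with h3 | h3
        · have e1 : min σ T = σ := by omega
          have e2 : min (σ+1) T = σ + 1 := by omega
          simp only [hg, e1, e2] at h2
          exact ⟨by omega, h2⟩
        · exfalso
          have e1 : min σ T = T := by omega
          have e2 : min (σ+1) T = T := by omega
          simp only [hg, e1, e2] at h2
          exact h2 rfl
      · rintro ⟨h1, h2⟩
        have hσT : σ < T := by omega
        have e1 : min σ T = σ := by omega
        have e2 : min (σ+1) T = σ + 1 := by omega
        refine ⟨by omega, ?_⟩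
        simp only [hg, e1, e2]
        exact h2
    have hqlen' : q.length = ix f T := by rw [hqlen, hixg]; simp
    have hfτ : ∀ τ, τ ≤ T → f τ = q.getVert (ix f τ) := by
      intro τ hτ
      have e1 : min τ T = τ := by omega
      have := hqtrack τ
      rw [hixg, e1] at this
      simpa [hg, e1] using this
    have hfT1 : f (T + 1) = t := hT (T+1) le_rfl
    rcases eq_or_ne (f T) (f (T + 1)) with hmv | hmv
    · -- no move at T: f is stable from T
      have hfTt : f T = t := by rw [hmv, hfT1]
      have hstab : ∀ τ, T ≤ τ → f τ = t := by
        intro τ h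
        rcases Nat.eq_or_lt_of_le h with rfl | h
        · exact hfTt
        · exact hT τ h
      refine ⟨q.copy rfl hfTt, by simp [hqlen', ix_stable f hstab (by omega : T ≤ T + 1)],
        fun τ => ?_⟩
      rw [SimpleGraph.Walk.getVert_copy]
      rcases le_or_gt τ T with h | h
      · exact hfτ τ h
      · rw [ix_stable f hstab h.le, ix_stable f hstab (le_refl T) ]
        have : ix f T = q.length := hqlen'.symm
        rw [this, SimpleGraph.Walk.getVert_length, hfTt]
        exact hstab τ h.le
    · -- move at T
      have hadj : G.Adj (f T) t := by
        rcases hstep T with h | h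
        · exact absurd h hmv
        · rw [← hfT1]; exact h
      refine ⟨q.concat hadj, ?_, fun τ => ?_⟩
      · rw [SimpleGraph.Walk.length_concat, hqlen',
          ix_succ_of_move f (by rw [hfT1]; exact (by rwa [hfT1] at hmv))]
      · have hgetc : ∀ i, i ≤ q.length → (q.concat hadj).getVert i = q.getVert i := by
          intro i hi
          rw [SimpleGraph.Walk.concat_eq_append, SimpleGraph.Walk.getVert_append]
          rcases lt_or_eq_of_le hi with h | h
          · rw [if_pos h]
          · rw [if_neg (by omega)]
            subst h
            simp
        have hstab : ∀ τ, T + 1 ≤ τ → f τ = t := hT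
        rcases le_or_gt τ T with h | h
        · have hle : ix f τ ≤ q.length := by rw [hqlen']; exact ix_mono f h
          rw [hgetc _ hle]
          exact hfτ τ h
        · rw [ix_stable f hstab h]
          have : ix f (T + 1) = q.length + 1 := by
            rw [ix_succ_of_move f hmv, hqlen']
          rw [this, SimpleGraph.Walk.getVert_of_length_le _ (by simp [SimpleGraph.Walk.length_concat])]
          exact hT τ h

/-- subwalk from index `a` to index `b` of a walk -/
lemma exists_subwalk (p : G.Walk s t) :
    ∀ (n a b : ℕ), b - a = n → a ≤ b → b ≤ p.length →
    ∃ W : G.Walk (p.getVert a) (p.getVert b), W.length = b - a ∧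
      ∀ i, i ≤ b - a → W.getVert i = p.getVert (a + i) := by
  intro n
  induction n with
  | zero =>
    intro a b hn hab hb
    have : b = a := by omega
    subst this
    refine ⟨SimpleGraph.Walk.nil, by simp, ?_⟩
    intro i hi
    have : i = 0 := by omega
    subst this
    simp
  | succ n IH =>
    intro a b hn hab hb
    have ha : a < b := by omega
    have hadj : G.Adj (p.getVert a) (p.getVert (a + 1)) :=
      p.adj_getVert_succ (by omega)
    obtain ⟨W, hWlen, hWget⟩ := IH (a+1) b (by omega) (by omega) hb
    refine ⟨SimpleGraph.Walk.cons hadj W, by rw [SimpleGraph.Walk.length_cons, hWlen]; omega,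
      fun i hi => ?_⟩
    cases i with
    | zero => simp
    | succ i =>
      rw [SimpleGraph.Walk.getVert_cons_succ, hWget i (by omega)]
      congr 1
      omega

lemma dist_getVert_le (p : G.Walk s t) {a b : ℕ} (hab : a ≤ b) (hb : b ≤ p.length) :
    G.dist (p.getVert a) (p.getVert b) ≤ b - a := by
  obtain ⟨W, hWlen, -⟩ := exists_subwalk p (b - a) a b rfl hab hb
  calc G.dist (p.getVert a) (p.getVert b) ≤ W.length := SimpleGraph.dist_le W
    _ = b - a := hWlen

/-- subsegments of shortest walks are shortest -/
lemma dist_getVert_eq (p : G.Walk s t) (hp : p.length = G.dist s t)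
    {a b : ℕ} (hab : a ≤ b) (hb : b ≤ p.length) :
    G.dist (p.getVert a) (p.getVert b) = b - a := by
  refine le_antisymm (dist_getVert_le p hab hb) ?_
  obtain ⟨W1, hW1len, -⟩ := exists_subwalk p a 0 a rfl (Nat.zero_le _) (le_trans hab hb)
  obtain ⟨W3, hW3len, -⟩ := exists_subwalk p (p.length - b) b p.length rfl hb le_rfl
  obtain ⟨W2, hW2len, -⟩ := exists_subwalk p (b - a) a b rfl hab hb
  obtain ⟨m, hm⟩ := SimpleGraph.Reachable.exists_walk_length_eq_dist ⟨W2⟩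
  have hcomp : G.dist s t ≤ a + G.dist (p.getVert a) (p.getVert b) + (p.length - b) := by
    have := SimpleGraph.dist_le (((W1.copy (p.getVert_zero) rfl).append m).append
      (W3.copy rfl (p.getVert_length)))
    simpa [SimpleGraph.Walk.length_append, hW1len, hW3len, hm] using this
  omega

/-- discrete intermediate value theorem -/
lemma nat_ivt (g : ℕ → ℕ) (hstep : ∀ τ, g (τ + 1) ≤ g τ + 1) {a b k : ℕ}
    (hab : a ≤ b) (h1 : g a ≤ k) (h2 : k ≤ g b) : ∃ τ, a ≤ τ ∧ τ ≤ b ∧ g τ = k := by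
  induction b, hab using Nat.le_induction with
  | base => exact ⟨a, le_rfl, le_rfl, le_antisymm h1 (by omega)⟩
  | succ b hab IH =>
    rcases le_or_gt k (g b) with h | h
    · obtain ⟨τ, h3, h4, h5⟩ := IH h
      exact ⟨τ, h3, by omega, h5⟩
    · have := hstep b
      exact ⟨b + 1, by omega, le_rfl, by omega⟩

/-- no overtaking on a path -/
lemma no_overtake (R Bp : ℕ → ℕ) {τ₁ τ₂ : ℕ} (h12 : τ₁ ≤ τ₂)
    (hRstep : ∀ τ, τ₁ ≤ τ → τ < τ₂ → R (τ + 1) ≤ R τ + 1)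
    (hBmono : ∀ τ, Bp τ ≤ Bp (τ + 1))
    (hne : ∀ τ, τ₁ ≤ τ → τ ≤ τ₂ → R τ ≠ Bp τ)
    (h1 : R τ₁ < Bp τ₁) (h2 : Bp τ₂ < R τ₂) : False := by
  have key : ∀ τ, τ₁ ≤ τ → τ ≤ τ₂ → R τ < Bp τ := by
    intro τ hτ₁
    induction τ, hτ₁ using Nat.le_induction with
    | base => exact fun _ => h1
    | succ τ hτ₁ IH =>
      intro hτ₂
      have hlt : R τ < Bp τ := IH (by omega)
      have h3 : R (τ + 1) ≤ R τ + 1 := hRstep τ hτ₁ (by omega)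
      have h4 : Bp τ ≤ Bp (τ + 1) := hBmono τ
      have h5 : R (τ + 1) ≠ Bp (τ + 1) := hne (τ + 1) (by omega) hτ₂
      omega
  exact absurd h2 (by have := key τ₂ h12 le_rfl; omega)

end BlockerInfra

/-- Lemma 1, blocker lemma: in any collision-free motion plan for
`M'(φ)` with distance cost `d*(M'(φ))`, for every variable gadget all the agents
that traverse the gadget take the same path through it, namely the one of the
two traversal paths not taken by the gadget's blocker agent. -/
theorem blocker_lemma (φ : CNF3) (K : NonMonoConstruction φ)
    (π : K.toMAPF.A → ℕ → K.toMAPF.V)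
    (hplan : K.toMAPF.IsPlan π) (hcf : K.toMAPF.CollisionFree π)
    (hopt : K.toMAPF.cost π = K.toMAPF.dStar) (v : φ.Vars) :
    ∃ B Q : (gridGraph K.cells).Walk (K.entrance v) (K.exitC v),
      ((B = K.topWalk v ∧ Q = K.botWalk v) ∨ (B = K.botWalk v ∧ Q = K.topWalk v)) ∧
      -- the blocker takes the traversal path `B`
      (∀ c ∈ B.support, ∃ τ : ℕ, π (blockerAgent v) τ = c) ∧
      -- every other agent traversing the gadget takes the traversal path `Q`
      (∀ r : K.toMAPF.A, r ≠ blockerAgent v → TraversesGadget K (π r) v →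
        (∀ c ∈ Q.support, ∃ τ : ℕ, π r τ = c) ∧
        (∀ c ∈ B.support, c ≠ K.entrance v → c ≠ K.exitC v → ∀ τ : ℕ, π r τ ≠ c)) := by
  classical
  -- extract tracking walks for all agents
  have hexists : ∀ r : K.toMAPF.A, ∃ p : K.toMAPF.G.Walk (K.toMAPF.s r) (K.toMAPF.t r),
      p.length = pathLength (π r) ∧ (∀ τ, π r τ = p.getVert (BlockerInfra.ix (π r) τ)) ∧
      (∀ τ, BlockerInfra.ix (π r) τ ≤ p.length) ∧
      (∃ T, BlockerInfra.ix (π r) T = p.length) := by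
    intro r
    obtain ⟨h0, ⟨T, hT⟩, hstep⟩ := hplan r
    have hstep' : ∀ τ, π r τ = π r (τ+1) ∨ K.toMAPF.G.Adj (π r τ) (π r (τ+1)) := by
      intro τ
      simpa using hstep (τ+1) (Nat.succ_pos τ)
    obtain ⟨p, hplen, htrack⟩ := BlockerInfra.exists_tracking_walk (π r) h0 hT hstep'
    have hPL : pathLength (π r) = BlockerInfra.ix (π r) T :=
      BlockerInfra.pathLength_eq_ix _ hT
    exact ⟨p, by rw [hplen, hPL], htrack,
      fun τ => hplen ▸ BlockerInfra.ix_le_stable _ hT τ, ⟨T, hplen.symm⟩⟩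
  choose P hPlen hPtrack hPle hPT using hexists
  -- per-agent optimality
  have hperagent : ∀ r : K.toMAPF.A, pathLength (π r) = K.toMAPF.G.dist (K.toMAPF.s r) (K.toMAPF.t r) := by
    have hle : ∀ r ∈ (Finset.univ : Finset K.toMAPF.A),
        K.toMAPF.G.dist (K.toMAPF.s r) (K.toMAPF.t r) ≤ pathLength (π r) := by
      intro r _
      rw [← hPlen r]
      exact SimpleGraph.dist_le (P r)
    have hsum : ∑ r : K.toMAPF.A, K.toMAPF.G.dist (K.toMAPF.s r) (K.toMAPF.t r) = ∑ r : K.toMAPF.A, pathLength (π r) := by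
      have : K.toMAPF.cost π = K.toMAPF.dStar := hopt
      rw [MAPF.cost, MAPF.dStar] at this
      exact this.symm
    intro r
    exact ((Finset.sum_eq_sum_iff_of_le hle).1 hsum r (Finset.mem_univ r)).symm
  have hPshort : ∀ r : K.toMAPF.A, (P r).length = K.toMAPF.G.dist (K.toMAPF.s r) (K.toMAPF.t r) := fun r => by
    rw [hPlen r, hperagent r]
  have hPpath : ∀ r : K.toMAPF.A, (P r).IsPath := fun r =>
    SimpleGraph.Walk.isPath_of_length_eq_dist (P r) (hPshort r)
  -- the blocker
  set b : K.toMAPF.A := blockerAgent v with hb_def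
  
  have hBwalk : (P b : (gridGraph K.cells).Walk (K.entrance v) (K.exitC v)) = P b := rfl
  set L := (P b).length with hL_def
  have hblen : (P b).length = (gridGraph K.cells).dist (K.entrance v) (K.exitC v) := hPshort b
  -- blocker covers its own path
  have hcov : ∀ c ∈ (P b).support, ∃ τ, π b τ = c := by
    intro c hc
    obtain ⟨m, hm, hmle⟩ := SimpleGraph.Walk.mem_support_iff_exists_getVert.1 hc
    obtain ⟨Tb, hTb⟩ := hPT b
    obtain ⟨τ, -, -, hτ⟩ := BlockerInfra.nat_ivt (k := m) (BlockerInfra.ix (π b))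
      (BlockerInfra.ix_succ_le _) (Nat.zero_le Tb) (by simp) (by rw [hTb]; exact hmle)
    exact ⟨τ, by rw [hPtrack b τ, hτ]; exact hm⟩
  -- blocker's path is a traversal path
  have hbor : (P b : (gridGraph K.cells).Walk (K.entrance v) (K.exitC v)) = K.topWalk v ∨ (P b : (gridGraph K.cells).Walk (K.entrance v) (K.exitC v)) = K.botWalk v :=
    K.two_paths v (P b) (hPpath b) hblen
  -- main claim for other agents
  have main : ∀ Qw : (gridGraph K.cells).Walk (K.entrance v) (K.exitC v),
      (((P b : (gridGraph K.cells).Walk (K.entrance v) (K.exitC v)) = K.topWalk v ∧ Qw = K.botWalk v) ∨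
        ((P b : (gridGraph K.cells).Walk (K.entrance v) (K.exitC v)) = K.botWalk v ∧ Qw = K.topWalk v)) →
      ∀ r : K.toMAPF.A, r ≠ b → TraversesGadget K (π r) v →
        (∀ c ∈ Qw.support, ∃ τ : ℕ, π r τ = c) ∧
        (∀ c ∈ (P b : (gridGraph K.cells).Walk (K.entrance v) (K.exitC v)).support, c ≠ (K.entrance v) → c ≠ (K.exitC v) → ∀ τ : ℕ, π r τ ≠ c) := by
    intro Qw hBQ r hr htrav
    obtain ⟨τ₁, τ₂, h12, he1, hx2⟩ := htrav
    set a := BlockerInfra.ix (π r) τ₁ with ha_def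
    set bI := BlockerInfra.ix (π r) τ₂ with hbI_def
    have hab : a ≤ bI := BlockerInfra.ix_mono (π r) h12
    have hbIle : bI ≤ (P r).length := hPle r τ₂
    have h_a : (P r).getVert a = (K.entrance v) := by rw [← hPtrack r τ₁]; exact he1
    have h_x : (P r).getVert bI = (K.exitC v) := by rw [← hPtrack r τ₂]; exact hx2
    obtain ⟨W0, hW0len, hW0get⟩ :=
      BlockerInfra.exists_subwalk (P r) (bI - a) a bI rfl hab hbIle
    have hWdist : (gridGraph K.cells).dist (K.entrance v) (K.exitC v) = bI - a := by
      rw [← h_a, ← h_x]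
      exact BlockerInfra.dist_getVert_eq (P r) (hPshort r) hab hbIle
    have hbIa : bI = a + L := by
      have := hblen
      omega
    set W : (gridGraph K.cells).Walk (K.entrance v) (K.exitC v) := W0.copy h_a h_x with hW_def
    have hWlen : W.length = (gridGraph K.cells).dist (K.entrance v) (K.exitC v) := by
      exact (SimpleGraph.Walk.length_copy W0 h_a h_x).trans (hW0len.trans hWdist.symm)
    have hWget : ∀ i, i ≤ bI - a → W.getVert i = (P r).getVert (a + i) := by
      intro i hi
      exact (SimpleGraph.Walk.getVert_copy W0 i h_a h_x).trans (hW0get i hi)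
    have hWpath : W.IsPath := SimpleGraph.Walk.isPath_of_length_eq_dist W hWlen
    have hWor : W = K.topWalk v ∨ W = K.botWalk v := K.two_paths v W hWpath hWlen
    -- collision facts
    have hcoll : ∀ τ, π r τ ≠ π b τ := (hcf r b hr).1
    -- W is not the blocker's path
    have hWnotB : W ≠ (P b : (gridGraph K.cells).Walk (K.entrance v) (K.exitC v)) := by
      intro hWB
      have hrW : ∀ τ, τ₁ ≤ τ → τ ≤ τ₂ →
          π r τ = (P b : (gridGraph K.cells).Walk (K.entrance v) (K.exitC v)).getVert (BlockerInfra.ix (π r) τ - a) := by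
        intro τ hτ1 hτ2
        have h1 : a ≤ BlockerInfra.ix (π r) τ := BlockerInfra.ix_mono (π r) hτ1
        have h2 : BlockerInfra.ix (π r) τ ≤ bI := BlockerInfra.ix_mono (π r) hτ2
        rw [← hWB]
        refine Eq.trans ?_ (hWget (BlockerInfra.ix (π r) τ - a) (by omega)).symm
        have : a + (BlockerInfra.ix (π r) τ - a) = BlockerInfra.ix (π r) τ := by omega
        rw [this]
        exact hPtrack r τ
      have hbtrack : ∀ τ, π b τ = (P b : (gridGraph K.cells).Walk (K.entrance v) (K.exitC v)).getVert (BlockerInfra.ix (π b) τ) :=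
        fun τ => hPtrack b τ
      refine BlockerInfra.no_overtake (fun τ => BlockerInfra.ix (π r) τ - a)
        (BlockerInfra.ix (π b)) h12 ?_ ?_ ?_ ?_ ?_
      · intro τ _ _
        show BlockerInfra.ix (π r) (τ + 1) - a ≤ BlockerInfra.ix (π r) τ - a + 1
        have := BlockerInfra.ix_succ_le (π r) τ
        omega
      · intro τ
        exact BlockerInfra.ix_mono (π b) (Nat.le_succ τ)
      · intro τ hτ1 hτ2 heq
        have heq' : BlockerInfra.ix (π r) τ - a = BlockerInfra.ix (π b) τ := heq
        apply hcoll τ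
        rw [hrW τ hτ1 hτ2, hbtrack τ, heq']
      · have hne0 : BlockerInfra.ix (π b) τ₁ ≠ 0 := by
          intro h0
          apply hcoll τ₁
          rw [hbtrack τ₁, h0, SimpleGraph.Walk.getVert_zero]
          exact he1
        show BlockerInfra.ix (π r) τ₁ - a < BlockerInfra.ix (π b) τ₁
        omega
      · have hle : BlockerInfra.ix (π b) τ₂ ≤ L := hPle b τ₂
        have hne : BlockerInfra.ix (π b) τ₂ ≠ L := by
          intro hLeq
          apply hcoll τ₂
          rw [hbtrack τ₂, hLeq]
          have hgl : (P b : (gridGraph K.cells).Walk (K.entrance v) (K.exitC v)).getVert L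
              = K.exitC v := SimpleGraph.Walk.getVert_length (P b)
          rw [hgl]
          exact hx2
        show BlockerInfra.ix (π b) τ₂ < BlockerInfra.ix (π r) τ₂ - a
        omega
    have hWQ : W = Qw := by
      rcases hBQ with ⟨hB1, hQ1⟩ | ⟨hB1, hQ1⟩ <;> rcases hWor with hW1 | hW1
      · exact absurd (hW1.trans hB1.symm) hWnotB
      · rw [hW1, hQ1]
      · rw [hW1, hQ1]
      · exact absurd (hW1.trans hB1.symm) hWnotB
    constructor
    · -- r covers Qw
      intro c hc
      rw [← hWQ] at hc
      obtain ⟨i, hi, hile⟩ := SimpleGraph.Walk.mem_support_iff_exists_getVert.1 hc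
      have hiL : i ≤ bI - a := by
        have := hWlen
        have := hW_def ▸ SimpleGraph.Walk.length_copy W0 h_a h_x
        omega
      obtain ⟨τ, hτ1, hτ2, hτ⟩ := BlockerInfra.nat_ivt (BlockerInfra.ix (π r))
        (BlockerInfra.ix_succ_le _) h12 (by omega) (by omega : a + i ≤ BlockerInfra.ix (π r) τ₂)
      refine ⟨τ, ?_⟩
      rw [hPtrack r τ, hτ, ← hWget i hiL, hi]
    · -- r avoids the interior of the blocker's path
      intro c hcB hce hcx τ hcontra
      obtain ⟨m, hm, hmle⟩ := SimpleGraph.Walk.mem_support_iff_exists_getVert.1 hcB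
      have hm0 : m ≠ 0 := by
        intro h0
        rw [h0, SimpleGraph.Walk.getVert_zero] at hm
        exact hce hm.symm
      have hmL : m ≠ (P b : (gridGraph K.cells).Walk (K.entrance v) (K.exitC v)).length := by
        intro hLeq
        rw [hLeq, SimpleGraph.Walk.getVert_length] at hm
        exact hcx hm.symm
      have hBsupl : (P b : (gridGraph K.cells).Walk (K.entrance v) (K.exitC v)).length = L := rfl
      set k := BlockerInfra.ix (π r) τ with hk_def
      have hkle : k ≤ (P r).length := hPle r τ
      have hck : (P r).getVert k = c := by rw [← hPtrack r τ]; exact hcontra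
      rcases lt_or_ge k a with hka | hka
      · -- before the entrance
        have hd1 : K.toMAPF.G.dist ((P r).getVert k) ((P r).getVert bI) = bI - k :=
          BlockerInfra.dist_getVert_eq (P r) (hPshort r) (by omega) hbIle
        rw [hck, h_x] at hd1
        have hd2 : K.toMAPF.G.dist ((P b : (gridGraph K.cells).Walk (K.entrance v) (K.exitC v)).getVert m)
            ((P b : (gridGraph K.cells).Walk (K.entrance v) (K.exitC v)).getVert (P b : (gridGraph K.cells).Walk (K.entrance v) (K.exitC v)).length) ≤
              (P b : (gridGraph K.cells).Walk (K.entrance v) (K.exitC v)).length - m :=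
          BlockerInfra.dist_getVert_le _ hmle le_rfl
        rw [hm, SimpleGraph.Walk.getVert_length] at hd2
        have hd2' : K.toMAPF.G.dist c (K.exitC v) ≤ (P b).length - m := hd2
        omega
      rcases le_or_gt k bI with hkb | hkb
      · -- inside the window: c would be on both traversal paths
        have hcW : c ∈ W.support := by
          apply (SimpleGraph.Walk.mem_support_iff_exists_getVert (p := W)).2
          refine ⟨k - a, ?_, ?_⟩
          · rw [hWget (k - a) (by omega)]
            have : a + (k - a) = k := by omega
            rw [this]
            exact hck
          · rw [hWlen, hWdist]
            omega
        rw [hWQ] at hcW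
        rcases hBQ with ⟨hB1, hQ1⟩ | ⟨hB1, hQ1⟩
        · have h1 : c ∈ (K.topWalk v).support := by rw [← hB1]; exact hcB
          have h2 : c ∈ (K.botWalk v).support := by rw [← hQ1]; exact hcW
          rcases K.internal_disjoint v c h1 h2 with h | h
          · exact hce h
          · exact hcx h
        · have h1 : c ∈ (K.botWalk v).support := by rw [← hB1]; exact hcB
          have h2 : c ∈ (K.topWalk v).support := by rw [← hQ1]; exact hcW
          rcases K.internal_disjoint v c h2 h1 with h | h
          · exact hce h
          · exact hcx h
      · -- after the exit
        have hd1 : K.toMAPF.G.dist ((P r).getVert a) ((P r).getVert k) = k - a :=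
          BlockerInfra.dist_getVert_eq (P r) (hPshort r) (by omega) hkle
        rw [hck, h_a] at hd1
        have hd2 : K.toMAPF.G.dist ((P b : (gridGraph K.cells).Walk (K.entrance v) (K.exitC v)).getVert 0)
            ((P b : (gridGraph K.cells).Walk (K.entrance v) (K.exitC v)).getVert m) ≤ m - 0 :=
          BlockerInfra.dist_getVert_le _ (Nat.zero_le m) hmle
        rw [hm, SimpleGraph.Walk.getVert_zero] at hd2
        have hd2' : K.toMAPF.G.dist (K.entrance v) c ≤ m - 0 := hd2
        omega
  rcases hbor with hB | hB
  · exact ⟨P b, K.botWalk v, Or.inl ⟨hB, rfl⟩, hcov,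
      fun r hr htrav => main (K.botWalk v) (Or.inl ⟨hB, rfl⟩) r hr htrav⟩
  · exact ⟨P b, K.topWalk v, Or.inr ⟨hB, rfl⟩, hcov,
      fun r hr htrav => main (K.topWalk v) (Or.inr ⟨hB, rfl⟩) r hr htrav⟩
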